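/- With λ satisfying the divisibility condition, the coefficient of E_ν in L_χ equals -⌊(1/p) Σ_{i : p_ν ∈ L_i} ⟨⟨χ, λ(L̄_i)⟩⟩⌋; in particular this coefficient is nonpositive, and it is ≥ -(d_ν - 1) where d_ν is the number of lines through p_ν (since each term ⟨⟨χ,λ(L̄_i)⟩⟩ ≤ p-1). -/

import Mathlib

/-- The coefficient of the exceptional divisor `E_ν` in
`L_χ = (1/p) Σ_D ⟨⟨χ, λ(D)⟩⟩ D` is
`(1/p)(⟨⟨χ, λ(E_ν)⟩⟩ - Σ_{i : p_ν ∈ L_i} ⟨⟨χ, λ(L̄_i)⟩⟩)` where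
`λ(E_ν) = Σ_{i : p_ν ∈ L_i} λ(L̄_i)`; it equals
`-⌊(1/p) Σ_{i : p_ν ∈ L_i} ⟨⟨χ, λ(L̄_i)⟩⟩⌋`, is nonpositive, and is at least
`-(d_ν - 1)` where `d_ν ≥ 3` is the number of lines through the (singular)
point `p_ν`.  Here `T` is the set of indices of lines through `p_ν`. -/
theorem stmt4 (p r n : ℕ) (hp : p.Prime)
    (lam : Fin n → (Fin r → ZMod p)) (T : Finset (Fin n)) (hT : 3 ≤ T.card)
    (χ : (Fin r → ZMod p) →+ ZMod p) :
    (((χ (∑ i ∈ T, lam i)).val : ℤ) - ∑ i ∈ T, ((χ (lam i)).val : ℤ)) / (p : ℤ) =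
        -⌊(∑ i ∈ T, ((χ (lam i)).val : ℤ) : ℚ) / (p : ℚ)⌋ ∧
    (((χ (∑ i ∈ T, lam i)).val : ℤ) - ∑ i ∈ T, ((χ (lam i)).val : ℤ)) / (p : ℤ) ≤ 0 ∧
    -((T.card : ℤ) - 1) ≤
      (((χ (∑ i ∈ T, lam i)).val : ℤ) - ∑ i ∈ T, ((χ (lam i)).val : ℤ)) / (p : ℤ) := by
  haveI : Fact p.Prime := ⟨hp⟩
  have hp0 : 0 < p := hp.pos
  set S : ℕ := ∑ i ∈ T, (χ (lam i)).val with hS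
  have hval : (χ (∑ i ∈ T, lam i)).val = S % p := by
    have : χ (∑ i ∈ T, lam i) = ((S : ℕ) : ZMod p) := by
      rw [map_sum, hS, Nat.cast_sum]
      exact Finset.sum_congr rfl fun i _ => by simp [ZMod.natCast_val]
    rw [this, ZMod.val_natCast]
  have hsum : (∑ i ∈ T, ((χ (lam i)).val : ℤ)) = (S : ℤ) := by
    rw [hS]; push_cast; ring
  have key : (((χ (∑ i ∈ T, lam i)).val : ℤ) - ∑ i ∈ T, ((χ (lam i)).val : ℤ))
      = -((p : ℤ) * (S / p : ℕ)) := by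
    rw [hsum, hval]
    have h : ((S % p : ℕ) : ℤ) + (p : ℤ) * ((S / p : ℕ) : ℤ) = (S : ℤ) := by
      exact_mod_cast Nat.mod_add_div S p
    omega
  have hdiv : (((χ (∑ i ∈ T, lam i)).val : ℤ) - ∑ i ∈ T, ((χ (lam i)).val : ℤ)) / (p : ℤ)
      = -((S / p : ℕ) : ℤ) := by
    rw [key, Int.neg_ediv_of_dvd ⟨_, rfl⟩, Int.mul_ediv_cancel_left]
    exact_mod_cast hp0.ne'
  have hfloor : ⌊(∑ i ∈ T, ((χ (lam i)).val : ℤ) : ℚ) / (p : ℚ)⌋ = ((S / p : ℕ) : ℤ) := by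
    have hq : (∑ i ∈ T, (((χ (lam i)).val : ℤ) : ℚ)) = ((S : ℤ) : ℚ) := by
      rw [hS]; push_cast; ring
    rw [hq, Rat.floor_intCast_div_natCast]
    exact (Int.natCast_ediv S p).symm
  refine ⟨by rw [hdiv, hfloor], by rw [hdiv]; exact neg_nonpos.mpr (Int.natCast_nonneg _), ?_⟩
  rw [hdiv]
  have hbound : S / p ≤ T.card - 1 := by
    have h1 : S ≤ T.card * (p - 1) := by
      rw [hS]
      calc ∑ i ∈ T, (χ (lam i)).val ≤ ∑ _i ∈ T, (p - 1) :=
            Finset.sum_le_sum fun i _ => Nat.le_sub_one_of_lt ((χ (lam i)).val_lt)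
        _ = T.card * (p - 1) := by rw [Finset.sum_const, smul_eq_mul]
    have e : T.card * (p - 1) + T.card = T.card * p := by
      rw [← Nat.mul_succ]; congr 1; omega
    have h2 : S < T.card * p := by omega
    have := Nat.div_lt_of_lt_mul (by rwa [mul_comm] at h2)
    omega
  have : ((S / p : ℕ) : ℤ) ≤ (T.card : ℤ) - 1 := by
    have : (T.card : ℤ) - 1 = ((T.card - 1 : ℕ) : ℤ) := by omega
    rw [this]; exact_mod_cast hbound
  omega
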